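/- Let H be a separable complex Hilbert space and let P be a bounded idempotent operator on H. Then the intersection of the orthogonal complement of the kernel of P with the range of P equals the kernel of 2I - P - P*: N(P)^⊥ ∩ R(P) = N(2I - P - P*). -/

import Mathlib

open ContinuousLinearMap

variable {H : Type*} [NormedAddCommGroup H] [InnerProductSpace ℂ H]
  [CompleteSpace H] [TopologicalSpace.SeparableSpace H]

/-- The absolute value `|A| = (A*A)^(1/2)` of a bounded operator. -/
noncomputable def absOp (A : H →L[ℂ] H) : H →L[ℂ] H := CFC.sqrt (star A * A)

/-- A symmetry is a self-adjoint unitary: `J = J* = J⁻¹`. -/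
def IsSymmetry (J : H →L[ℂ] H) : Prop := IsSelfAdjoint J ∧ J * J = 1

theorem stmt_4 (P : H →L[ℂ] H) (hP : P * P = P) :
    (LinearMap.ker (P : H →ₗ[ℂ] H))ᗮ ⊓ LinearMap.range (P : H →ₗ[ℂ] H) =
      LinearMap.ker (((2 : ℂ) • (1 : H →L[ℂ] H) - P - star P : H →L[ℂ] H) : H →ₗ[ℂ] H) := by
  have hP' : star P * star P = star P := by rw [← star_mul, hP]
  have hPP : ∀ v : H, P (P v) = P v := fun v => by
    rw [← ContinuousLinearMap.mul_apply, hP]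
  have hPP' : ∀ v : H, star P (star P v) = star P v := fun v => by
    rw [← ContinuousLinearMap.mul_apply, hP']
  ext x
  simp only [Submodule.mem_inf, Submodule.mem_orthogonal, LinearMap.mem_ker,
    LinearMap.mem_range, ContinuousLinearMap.sub_apply,
    ContinuousLinearMap.smul_apply, ContinuousLinearMap.one_apply, ContinuousLinearMap.coe_coe]
  constructor
  · rintro ⟨ho, y, hy⟩
    have hPx : P x = x := by rw [← hy, hPP]
    have hP'x : star P x = x := by
      apply ext_inner_left ℂ
      intro v
      have hk : P (v - P v) = 0 := by simp [map_sub, hPP]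
      have hv := ho (v - P v) hk
      rw [inner_sub_left] at hv
      rw [ContinuousLinearMap.star_eq_adjoint, ContinuousLinearMap.adjoint_inner_right]
      linear_combination -hv
    rw [hPx, hP'x, two_smul]
    abel
  · intro h
    have heq : star P x = ((2 : ℂ) • x - P x) := by
      rw [eq_sub_iff_add_eq, ← sub_eq_zero]
      linear_combination (norm := module) -h
    have hP'Px : star P (P x) = star P x := by
      have h1 := congrArg (⇑(star P)) heq
      rw [map_sub, map_smul, hPP'] at h1
      have h1' := eq_sub_iff_add_eq.mp h1.symm.symm
      rw [two_smul ℂ (star P x)] at h1'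
      exact (add_left_cancel h1'.symm.symm : _)
    have hP'u : star P (x - P x) = 0 := by rw [map_sub, hP'Px, sub_self]
    have hPu : P (x - P x) = 0 := by rw [map_sub, hPP, sub_self]
    have hu' : x - P x = star P x - x := by
      rw [heq, two_smul]; abel
    have a1 : (inner ℂ (x - P x) (x - P x) : ℂ) = inner ℂ x (x - P x) := by
      rw [inner_sub_left]
      have hA : (inner ℂ (P x) (x - P x) : ℂ) = 0 := by
        rw [show (inner ℂ (P x) (x - P x) : ℂ) = inner ℂ x (star P (x - P x)) by
          rw [ContinuousLinearMap.star_eq_adjoint, ContinuousLinearMap.adjoint_inner_right],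
          hP'u, inner_zero_right]
      rw [hA, sub_zero]
    have a2 : (inner ℂ (x - P x) (x - P x) : ℂ) = - inner ℂ (x - P x) x := by
      nth_rewrite 2 [hu']
      rw [inner_sub_right]
      have hB : (inner ℂ (x - P x) (star P x) : ℂ) = 0 := by
        rw [ContinuousLinearMap.star_eq_adjoint, ContinuousLinearMap.adjoint_inner_right,
          hPu, inner_zero_left]
      rw [hB, zero_sub]
    have hS : (inner ℂ (x - P x) (x - P x) : ℂ) = 0 := by
      have h3 : (inner ℂ (x - P x) x : ℂ)
          = starRingEnd ℂ (inner ℂ x (x - P x) : ℂ) := (inner_conj_symm (x - P x) x).symm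
      have h4 : starRingEnd ℂ (inner ℂ (x - P x) (x - P x) : ℂ)
          = (inner ℂ (x - P x) (x - P x) : ℂ) := inner_conj_symm _ _
      rw [← a1] at h3
      rw [h3, h4] at a2
      have : (2 : ℂ) * (inner ℂ (x - P x) (x - P x) : ℂ) = 0 := by linear_combination a2
      exact (mul_eq_zero.mp this).resolve_left two_ne_zero
    have hu0 : x - P x = 0 := inner_self_eq_zero.mp hS
    have hPx : P x = x := (sub_eq_zero.mp hu0).symm
    have hP'x : star P x = x := by rw [heq, hPx, two_smul]; abel
    refine ⟨?_, ⟨x, hPx⟩⟩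
    intro y hy
    rw [← hP'x, ContinuousLinearMap.star_eq_adjoint,
      ContinuousLinearMap.adjoint_inner_right, hy, inner_zero_left]
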